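/- If M is a loopless matroid on [n] and D(M,M) does not have expected rank, i.e. rank(D(M,M)) < 2·rank(M) − 1, then D(M,M) is disconnected. -/

import Mathlib

open Finset

/-- A matroid on the ground set `Fin n`, presented by its rank function. -/
structure FinMatroid (n : ℕ) where
  rank : Finset (Fin n) → ℕ
  rank_empty : rank ∅ = 0
  rank_le_card : ∀ S : Finset (Fin n), rank S ≤ S.card
  rank_mono : ∀ ⦃S T : Finset (Fin n)⦄, S ⊆ T → rank S ≤ rank T
  rank_submod : ∀ S T : Finset (Fin n),
    rank (S ∪ T) + rank (S ∩ T) ≤ rank S + rank T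

namespace FinMatroid

variable {n : ℕ}

/-- A set is independent if its rank equals its cardinality. -/
def Indep (M : FinMatroid n) (I : Finset (Fin n)) : Prop := M.rank I = I.card

/-- The rank of the matroid (rank of the full ground set). -/
def rk (M : FinMatroid n) : ℕ := M.rank Finset.univ

/-- A matroid is loopless if every singleton has positive rank. -/
def Loopless (M : FinMatroid n) : Prop := ∀ i : Fin n, 0 < M.rank {i}

/-- Two matroids on `[n]` have no common loops. -/
def NoCommonLoops (M₁ M₂ : FinMatroid n) : Prop :=
  ∀ i : Fin n, 0 < M₁.rank {i} ∨ 0 < M₂.rank {i}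

/-- A valid family for the Dilworth minimum: pairwise disjoint nonempty
subsets of `S`. -/
def ValidFamily (S : Finset (Fin n)) (𝒯 : Finset (Finset (Fin n))) : Prop :=
  (∀ T ∈ 𝒯, T ⊆ S ∧ T.Nonempty) ∧
    ∀ T ∈ 𝒯, ∀ T' ∈ 𝒯, T ≠ T' → Disjoint T T'

/-- The value `Σ_i (rank_{M₁}(T_i) + rank_{M₂}(T_i) − 1) + |S \ ∪ T_i|`
associated to a family. -/
def famValue (M₁ M₂ : FinMatroid n) (S : Finset (Fin n))
    (𝒯 : Finset (Finset (Fin n))) : ℕ :=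
  (∑ T ∈ 𝒯, (M₁.rank T + M₂.rank T - 1)) + (S \ 𝒯.sup id).card

/-- The rank function of the diagonal Dilworth truncation `D(M₁,M₂)`. -/
noncomputable def rankD (M₁ M₂ : FinMatroid n) (S : Finset (Fin n)) : ℕ :=
  sInf {v : ℕ | ∃ 𝒯 : Finset (Finset (Fin n)),
    ValidFamily S 𝒯 ∧ v = famValue M₁ M₂ S 𝒯}

/-- Independence in the diagonal Dilworth truncation. -/
def IndepD (M₁ M₂ : FinMatroid n) (I : Finset (Fin n)) : Prop :=
  rankD M₁ M₂ I = I.card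

/-- Circuits of the diagonal Dilworth truncation: minimal dependent sets. -/
def CircuitD (M₁ M₂ : FinMatroid n) (C : Finset (Fin n)) : Prop :=
  ¬ IndepD M₁ M₂ C ∧ ∀ C' : Finset (Fin n), C' ⊂ C → IndepD M₁ M₂ C'

variable (M : FinMatroid n)

lemma valid_empty (S : Finset (Fin n)) : ValidFamily S (∅ : Finset (Finset (Fin n))) :=
  ⟨by simp, by simp⟩

lemma rankD_le {S 𝒯} (h : ValidFamily S 𝒯) : rankD M M S ≤ famValue M M S 𝒯 :=
  Nat.sInf_le ⟨𝒯, h, rfl⟩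

lemma rankD_spec (S : Finset (Fin n)) :
    ∃ 𝒯, ValidFamily S 𝒯 ∧ rankD M M S = famValue M M S 𝒯 :=
  Nat.sInf_mem (⟨_, ∅, valid_empty S, rfl⟩ :
    {v : ℕ | ∃ 𝒯, ValidFamily S 𝒯 ∧ v = famValue M M S 𝒯}.Nonempty)

lemma rank_singleton (hM : M.Loopless) (i : Fin n) : M.rank {i} = 1 :=
  le_antisymm (by simpa using M.rank_le_card {i}) (hM i)

lemma rank_pos (hM : M.Loopless) {T : Finset (Fin n)} (hT : T.Nonempty) :
    1 ≤ M.rank T := by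
  obtain ⟨x, hx⟩ := hT
  calc 1 = M.rank {x} := (rank_singleton M hM x).symm
    _ ≤ M.rank T := M.rank_mono (by simpa using hx)

lemma sup_subset {S : Finset (Fin n)} {𝒯} (h : ValidFamily S 𝒯) : 𝒯.sup id ⊆ S :=
  Finset.sup_le fun T hT => (h.1 T hT).1

lemma sum_two_sub_one {α : Type*} [DecidableEq α] (f : α → ℕ) :
    ∀ s : Finset α, (∀ i ∈ s, 1 ≤ f i) →
      (∑ i ∈ s, (f i + f i - 1)) + s.card = ∑ i ∈ s, (f i + f i) := by
  intro s
  induction s using Finset.induction_on with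
  | empty => simp
  | insert _ _ hx ih =>
    intro h
    rw [Finset.sum_insert hx, Finset.sum_insert hx, Finset.card_insert_of_notMem hx]
    have h1 := h _ (Finset.mem_insert_self _ _)
    have h2 := ih fun i hi => h i (Finset.mem_insert_of_mem hi)
    omega

/-- optimal covering family -/
lemma exists_covering (hM : M.Loopless) (S : Finset (Fin n)) :
    ∃ 𝒯, ValidFamily S 𝒯 ∧ 𝒯.sup id = S ∧
      rankD M M S = ∑ T ∈ 𝒯, (M.rank T + M.rank T - 1) := by
  obtain ⟨𝒯₀, hv, hr⟩ := rankD_spec M S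
  set L := S \ 𝒯₀.sup id with hL
  set 𝒯 := 𝒯₀ ∪ L.image (fun x => {x}) with h𝒯
  have hsing : ∀ x ∈ L, ({x} : Finset (Fin n)) ∉ 𝒯₀ := by
    intro x hx hmem
    have : x ∈ 𝒯₀.sup id := Finset.le_sup (f := id) hmem (by simp)
    rw [hL, Finset.mem_sdiff] at hx; exact hx.2 this
  have hdisjfam : Disjoint 𝒯₀ (L.image (fun x => {x})) := by
    rw [Finset.disjoint_right]
    intro A hA
    simp only [Finset.mem_image] at hA
    obtain ⟨x, hx, rfl⟩ := hA
    exact hsing x hx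
  have hvalid : ValidFamily S 𝒯 := by
    constructor
    · intro T hT
      rw [h𝒯, Finset.mem_union] at hT
      rcases hT with hT | hT
      · exact hv.1 T hT
      · simp only [Finset.mem_image] at hT
        obtain ⟨x, hx, rfl⟩ := hT
        have : x ∈ S := (Finset.mem_sdiff.1 hx).1
        exact ⟨by simpa using this, by simp⟩
    · intro T hT T' hT' hne
      rw [h𝒯, Finset.mem_union] at hT hT'
      have key : ∀ x ∈ L, ∀ T ∈ 𝒯₀, Disjoint ({x} : Finset (Fin n)) T := by
        intro x hx T hT
        rw [Finset.disjoint_left]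
        intro a ha hAT
        rw [Finset.mem_singleton] at ha; subst ha
        have : a ∈ 𝒯₀.sup id := Finset.le_sup (f := id) hT hAT
        rw [hL, Finset.mem_sdiff] at hx; exact hx.2 this
      rcases hT with hT | hT <;> rcases hT' with hT' | hT'
      · exact hv.2 T hT T' hT' hne
      · simp only [Finset.mem_image] at hT'
        obtain ⟨x, hx, rfl⟩ := hT'
        exact (key x hx T hT).symm
      · simp only [Finset.mem_image] at hT
        obtain ⟨x, hx, rfl⟩ := hT
        exact key x hx T' hT'
      · simp only [Finset.mem_image] at hT hT'
        obtain ⟨x, hx, rfl⟩ := hT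
        obtain ⟨y, hy, rfl⟩ := hT'
        simp only [Finset.disjoint_singleton_left, Finset.mem_singleton]
        intro h; apply hne; rw [h]
  have hsup : 𝒯.sup id = S := by
    apply subset_antisymm (sup_subset hvalid)
    intro x hx
    rw [h𝒯, Finset.sup_union]
    by_cases hx0 : x ∈ 𝒯₀.sup id
    · exact Finset.mem_union_left _ hx0
    · have hxL : x ∈ L := Finset.mem_sdiff.2 ⟨hx, hx0⟩
      apply Finset.mem_union_right
      have : ({x} : Finset (Fin n)) ∈ L.image (fun x => {x}) :=
        Finset.mem_image_of_mem _ hxL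
      exact Finset.mem_of_subset (Finset.le_sup (f := id) this) (by simp)
  refine ⟨𝒯, hvalid, hsup, ?_⟩
  have hval : famValue M M S 𝒯 = ∑ T ∈ 𝒯, (M.rank T + M.rank T - 1) := by
    rw [famValue, hsup]; simp
  have hsum : ∑ T ∈ 𝒯, (M.rank T + M.rank T - 1) = famValue M M S 𝒯₀ := by
    rw [h𝒯, Finset.sum_union hdisjfam, famValue]
    congr 1
    rw [Finset.sum_image (by intro x _ y _ h; simpa using h)]
    rw [← hL]
    have : ∀ x ∈ L, M.rank {x} + M.rank {x} - 1 = 1 := by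
      intro x _; rw [rank_singleton M hM]
    rw [Finset.sum_congr rfl this, Finset.sum_const, smul_eq_mul, mul_one]
  have h1 : rankD M M S ≤ famValue M M S 𝒯 := rankD_le M hvalid
  omega


/-- Uncrossing a set against a pairwise disjoint family. -/
lemma lemA (T : Finset (Fin n)) (Ps : Finset (Finset (Fin n)))
    (hd : ∀ P ∈ Ps, ∀ P' ∈ Ps, P ≠ P' → Disjoint P P') :
    M.rank (T ∪ Ps.sup id) + ∑ P ∈ Ps, M.rank (T ∩ P) ≤
      M.rank T + ∑ P ∈ Ps, M.rank P := by
  induction Ps using Finset.induction_on generalizing T with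
  | empty => simp
  | @insert P Ps hP ih =>
    have hd' : ∀ A ∈ Ps, ∀ B ∈ Ps, A ≠ B → Disjoint A B := fun A hA B hB =>
      hd A (Finset.mem_insert_of_mem hA) B (Finset.mem_insert_of_mem hB)
    have hPdisj : ∀ P' ∈ Ps, Disjoint P P' := by
      intro P' hP'
      exact hd P (Finset.mem_insert_self _ _) P' (Finset.mem_insert_of_mem hP')
        (fun h => hP (h ▸ hP'))
    have hrw : ∀ P' ∈ Ps, (T ∪ P) ∩ P' = T ∩ P' := by
      intro P' hP'
      rw [Finset.union_inter_distrib_right,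
        Finset.disjoint_iff_inter_eq_empty.1 (hPdisj P' hP'), Finset.union_empty]
    have hrw2 : ∀ P' ∈ Ps, M.rank ((T ∪ P) ∩ P') = M.rank (T ∩ P') :=
      fun P' h => by rw [hrw P' h]
    have ihTP := ih (T ∪ P) hd'
    rw [Finset.sum_congr rfl hrw2] at ihTP
    have hsub := M.rank_submod T P
    rw [Finset.sum_insert hP, Finset.sum_insert hP, Finset.sup_insert]
    have : T ∪ (id P ⊔ Ps.sup id) = (T ∪ P) ∪ Ps.sup id := by
      simp [Finset.union_assoc]
    rw [this]
    omega

/-- single-set submodularity for rankD -/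
lemma L3 (hM : M.Loopless) (A T : Finset (Fin n)) (hT : T.Nonempty) :
    rankD M M (A ∪ T) + rankD M M (A ∩ T) ≤
      rankD M M A + (M.rank T + M.rank T - 1) := by
  obtain ⟨Ps, hv, hsup, hr⟩ := exists_covering M hM A
  classical
  set Ps1 := Ps.filter (fun P => (P ∩ T).Nonempty) with hP1def
  set Ps2 := Ps.filter (fun P => ¬(P ∩ T).Nonempty) with hP2def
  set W := T ∪ Ps1.sup id with hW
  -- facts
  have hmem1 : ∀ P ∈ Ps1, P ∈ Ps ∧ (P ∩ T).Nonempty := by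
    intro P hP; rw [hP1def, Finset.mem_filter] at hP; exact hP
  have hmem2 : ∀ P ∈ Ps2, P ∈ Ps ∧ P ∩ T = ∅ := by
    intro P hP; rw [hP2def, Finset.mem_filter] at hP
    exact ⟨hP.1, Finset.not_nonempty_iff_eq_empty.1 hP.2⟩
  have hWT : T ⊆ W := Finset.subset_union_left
  have hWn : W.Nonempty := hT.mono hWT
  have hWnot : W ∉ Ps2 := by
    intro h
    have := (hmem2 W h).2
    obtain ⟨x, hx⟩ := hT
    have : x ∈ W ∩ T := Finset.mem_inter.2 ⟨hWT hx, hx⟩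
    rw [(hmem2 W ‹W ∈ Ps2›).2] at this
    exact absurd this (Finset.notMem_empty x)
  have hsup1 : Ps1.sup id ⊆ A :=
    Finset.sup_le fun P hP => (hv.1 P (hmem1 P hP).1).1
  -- family for A ∪ T
  have hvalid1 : ValidFamily (A ∪ T) (insert W Ps2) := by
    constructor
    · intro U hU
      rcases Finset.mem_insert.1 hU with rfl | hU
      · refine ⟨?_, hWn⟩
        rw [hW]
        exact Finset.union_subset Finset.subset_union_right
          (hsup1.trans Finset.subset_union_left)
      · have h2 := hmem2 U hU
        exact ⟨(hv.1 U h2.1).1.trans Finset.subset_union_left, (hv.1 U h2.1).2⟩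
    · intro U hU U' hU' hne
      have hWP2 : ∀ P ∈ Ps2, Disjoint W P := by
        intro P hP
        have h2 := hmem2 P hP
        rw [hW, Finset.disjoint_union_left]
        constructor
        · rw [Finset.disjoint_left]; intro a ha haP
          have : a ∈ P ∩ T := Finset.mem_inter.2 ⟨haP, ha⟩
          rw [h2.2] at this; exact absurd this (Finset.notMem_empty a)
        · rw [Finset.disjoint_sup_left]
          intro Q hQ
          have h1 := hmem1 Q hQ
          apply hv.2 Q h1.1 P h2.1
          intro h; subst h
          exact absurd h1.2 (by rw [h2.2]; simp)
      rcases Finset.mem_insert.1 hU with rfl | hU <;>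
        rcases Finset.mem_insert.1 hU' with rfl | hU'
      · exact absurd rfl hne
      · exact hWP2 _ hU'
      · exact (hWP2 _ hU).symm
      · exact hv.2 U (hmem2 U hU).1 U' (hmem2 U' hU').1 hne
  have hcov1 : (insert W Ps2).sup id = A ∪ T := by
    apply subset_antisymm (sup_subset hvalid1)
    intro x hx
    rw [Finset.sup_insert]
    rcases Finset.mem_union.1 hx with hx | hx
    · have : x ∈ Ps.sup id := hsup ▸ hx
      rw [Finset.mem_sup] at this
      obtain ⟨P, hP, hxP⟩ := this
      by_cases hPT : (P ∩ T).Nonempty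
      · have hP1x : P ∈ Ps1 := Finset.mem_filter.2 ⟨hP, hPT⟩
        apply Finset.mem_union_left
        show x ∈ W
        rw [hW]
        exact Finset.mem_union_right _ (Finset.mem_sup.2 ⟨P, hP1x, hxP⟩)
      · have hP2x : P ∈ Ps2 := Finset.mem_filter.2 ⟨hP, hPT⟩
        exact Finset.mem_union_right _ (Finset.mem_sup.2 ⟨P, hP2x, hxP⟩)
    · exact Finset.mem_union_left _ (hWT hx)
  -- family for A ∩ T
  have hinj : ∀ P ∈ Ps1, ∀ P' ∈ Ps1, P ∩ T = P' ∩ T → P = P' := by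
    intro P hP P' hP' h
    by_contra hne
    have hdisj := hv.2 P (hmem1 P hP).1 P' (hmem1 P' hP').1 hne
    obtain ⟨x, hx⟩ := (hmem1 P hP).2
    have hx' : x ∈ P' ∩ T := h ▸ hx
    exact Finset.disjoint_left.1 hdisj (Finset.mem_inter.1 hx).1
      (Finset.mem_inter.1 hx').1
  have hvalid2 : ValidFamily (A ∩ T) (Ps1.image (fun P => P ∩ T)) := by
    constructor
    · intro U hU
      obtain ⟨P, hP, rfl⟩ := Finset.mem_image.1 hU
      refine ⟨?_, (hmem1 P hP).2⟩
      exact Finset.inter_subset_inter (hv.1 P (hmem1 P hP).1).1 (le_refl T)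
    · intro U hU U' hU' hne
      obtain ⟨P, hP, rfl⟩ := Finset.mem_image.1 hU
      obtain ⟨P', hP', rfl⟩ := Finset.mem_image.1 hU'
      have hPne : P ≠ P' := fun h => hne (h ▸ rfl)
      exact Finset.disjoint_of_subset_left Finset.inter_subset_left
        (Finset.disjoint_of_subset_right Finset.inter_subset_left
          (hv.2 P (hmem1 P hP).1 P' (hmem1 P' hP').1 hPne))
  have hcov2 : (Ps1.image (fun P => P ∩ T)).sup id = A ∩ T := by
    apply subset_antisymm (sup_subset hvalid2)
    intro x hx
    have hxA := (Finset.mem_inter.1 hx).1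
    have hxT := (Finset.mem_inter.1 hx).2
    have : x ∈ Ps.sup id := hsup ▸ hxA
    rw [Finset.mem_sup] at this
    obtain ⟨P, hP, hxP⟩ := this
    have hP1 : P ∈ Ps1 := Finset.mem_filter.2 ⟨hP, ⟨x, Finset.mem_inter.2 ⟨hxP, hxT⟩⟩⟩
    exact Finset.mem_sup.2 ⟨P ∩ T, Finset.mem_image_of_mem _ hP1,
      Finset.mem_inter.2 ⟨hxP, hxT⟩⟩
  -- value bounds
  have hb1 : rankD M M (A ∪ T) ≤
      (M.rank W + M.rank W - 1) + ∑ P ∈ Ps2, (M.rank P + M.rank P - 1) := by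
    have := rankD_le M hvalid1
    rw [famValue, hcov1, Finset.sdiff_self, Finset.card_empty,
      Finset.sum_insert hWnot] at this
    omega
  have hb2 : rankD M M (A ∩ T) ≤ ∑ P ∈ Ps1, (M.rank (P ∩ T) + M.rank (P ∩ T) - 1) := by
    have := rankD_le M hvalid2
    rw [famValue, hcov2, Finset.sdiff_self, Finset.card_empty,
      Finset.sum_image (fun P hP P' hP' h => hinj P hP P' hP' h)] at this
    omega
  -- numeric part
  have hA1 : M.rank W + ∑ P ∈ Ps1, M.rank (T ∩ P) ≤ M.rank T + ∑ P ∈ Ps1, M.rank P := by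
    rw [hW]
    exact lemA M T Ps1 (fun P hP P' hP' h =>
      hv.2 P (hmem1 P hP).1 P' (hmem1 P' hP').1 h)
  rw [Finset.sum_congr rfl (fun P _ => by rw [Finset.inter_comm])] at hA1
  have hs1 : (∑ P ∈ Ps1, (M.rank (P ∩ T) + M.rank (P ∩ T) - 1)) + Ps1.card =
      ∑ P ∈ Ps1, (M.rank (P ∩ T) + M.rank (P ∩ T)) :=
    sum_two_sub_one _ _ (fun P hP => rank_pos M hM (hmem1 P hP).2)
  have hs2 : (∑ P ∈ Ps1, (M.rank P + M.rank P - 1)) + Ps1.card =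
      ∑ P ∈ Ps1, (M.rank P + M.rank P) :=
    sum_two_sub_one _ _ (fun P hP => rank_pos M hM (hv.1 P (hmem1 P hP).1).2)
  have hsum_eq : ∑ P ∈ Ps, (M.rank P + M.rank P - 1) =
      ∑ P ∈ Ps1, (M.rank P + M.rank P - 1) + ∑ P ∈ Ps2, (M.rank P + M.rank P - 1) := by
    rw [hP1def, hP2def, Finset.sum_filter_add_sum_filter_not]
  have hd1 : ∑ P ∈ Ps1, (M.rank (P ∩ T)) + ∑ P ∈ Ps1, (M.rank (P ∩ T)) =
      ∑ P ∈ Ps1, (M.rank (P ∩ T) + M.rank (P ∩ T)) := by rw [Finset.sum_add_distrib]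
  have hd2 : ∑ P ∈ Ps1, M.rank P + ∑ P ∈ Ps1, M.rank P =
      ∑ P ∈ Ps1, (M.rank P + M.rank P) := by rw [Finset.sum_add_distrib]
  have hWpos : 1 ≤ M.rank W := rank_pos M hM hWn
  have hTpos : 1 ≤ M.rank T := rank_pos M hM hT
  omega


/-- subadditivity across disjoint sets -/
lemma L2 {X Y : Finset (Fin n)} (hXY : Disjoint X Y) :
    rankD M M (X ∪ Y) ≤ rankD M M X + rankD M M Y := by
  obtain ⟨As, hvA, hrA⟩ := rankD_spec M X
  obtain ⟨Bs, hvB, hrB⟩ := rankD_spec M Y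
  have hAB : Disjoint As Bs := by
    rw [Finset.disjoint_left]
    intro U hUA hUB
    obtain ⟨x, hx⟩ := (hvA.1 U hUA).2
    exact Finset.disjoint_left.1 hXY ((hvA.1 U hUA).1 hx) ((hvB.1 U hUB).1 hx)
  have hvalid : ValidFamily (X ∪ Y) (As ∪ Bs) := by
    constructor
    · intro U hU
      rcases Finset.mem_union.1 hU with h | h
      · exact ⟨(hvA.1 U h).1.trans Finset.subset_union_left, (hvA.1 U h).2⟩
      · exact ⟨(hvB.1 U h).1.trans Finset.subset_union_right, (hvB.1 U h).2⟩
    · intro U hU U' hU' hne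
      rcases Finset.mem_union.1 hU with h | h <;> rcases Finset.mem_union.1 hU' with h' | h'
      · exact hvA.2 U h U' h' hne
      · exact Finset.disjoint_of_subset_left (hvA.1 U h).1
          (Finset.disjoint_of_subset_right (hvB.1 U' h').1 hXY)
      · exact Finset.disjoint_of_subset_left (hvB.1 U h).1
          (Finset.disjoint_of_subset_right (hvA.1 U' h').1 hXY.symm)
      · exact hvB.2 U h U' h' hne
  have hle := rankD_le M hvalid
  have hsupA := sup_subset hvA
  have hsupB := sup_subset hvB
  have hval : famValue M M (X ∪ Y) (As ∪ Bs) = famValue M M X As + famValue M M Y Bs := by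
    rw [famValue, famValue, famValue, Finset.sum_union hAB, Finset.sup_union]
    have hsd : (X ∪ Y) \ (As.sup id ⊔ Bs.sup id) =
        (X \ As.sup id) ∪ (Y \ Bs.sup id) := by
      show (X ∪ Y) \ (As.sup id ∪ Bs.sup id) = _
      ext x
      simp only [Finset.mem_sdiff, Finset.mem_union]
      constructor
      · rintro ⟨hx | hx, hns⟩
        · exact Or.inl ⟨hx, fun h => hns (Or.inl h)⟩
        · exact Or.inr ⟨hx, fun h => hns (Or.inr h)⟩
      · rintro (⟨hx, hns⟩ | ⟨hx, hns⟩)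
        · exact ⟨Or.inl hx, fun h => by
            rcases h with h | h
            · exact hns h
            · exact Finset.disjoint_left.1 hXY hx (hsupB h)⟩
        · exact ⟨Or.inr hx, fun h => by
            rcases h with h | h
            · exact Finset.disjoint_left.1 hXY (hsupA h) hx
            · exact hns h⟩
    have hcd : Disjoint (X \ As.sup id) (Y \ Bs.sup id) :=
      Finset.disjoint_of_subset_left (Finset.sdiff_subset)
        (Finset.disjoint_of_subset_right (Finset.sdiff_subset) hXY)
    rw [hsd, Finset.card_union_of_disjoint hcd]
    ring
  omega

lemma rankD_empty : rankD M M (∅ : Finset (Fin n)) = 0 := by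
  have := rankD_le M (valid_empty (∅ : Finset (Fin n)))
  simp [famValue] at this
  omega

lemma L2' (A : Finset (Fin n)) (Qs : Finset (Finset (Fin n)))
    (hd : ∀ Q ∈ Qs, ∀ Q' ∈ Qs, Q ≠ Q' → Disjoint Q Q') :
    rankD M M (A ∩ Qs.sup id) ≤ ∑ Q ∈ Qs, rankD M M (A ∩ Q) := by
  induction Qs using Finset.induction_on with
  | empty => simp [rankD_empty]
  | @insert Q Qs hQ ih =>
    have hd' : ∀ B ∈ Qs, ∀ B' ∈ Qs, B ≠ B' → Disjoint B B' := fun B hB B' hB' =>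
      hd B (Finset.mem_insert_of_mem hB) B' (Finset.mem_insert_of_mem hB')
    have hQd : Disjoint Q (Qs.sup id) := by
      rw [Finset.disjoint_sup_right]
      intro Q' hQ'
      exact hd Q (Finset.mem_insert_self _ _) Q' (Finset.mem_insert_of_mem hQ')
        (fun h => hQ (h ▸ hQ'))
    rw [Finset.sup_insert, Finset.sum_insert hQ]
    have heq : A ∩ (id Q ⊔ Qs.sup id) = (A ∩ Q) ∪ (A ∩ Qs.sup id) := by
      simp [Finset.inter_union_distrib_left]
    rw [heq]
    have hdisj : Disjoint (A ∩ Q) (A ∩ Qs.sup id) :=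
      Finset.disjoint_of_subset_left Finset.inter_subset_right
        (Finset.disjoint_of_subset_right Finset.inter_subset_right hQd)
    calc rankD M M ((A ∩ Q) ∪ (A ∩ Qs.sup id)) ≤
        rankD M M (A ∩ Q) + rankD M M (A ∩ Qs.sup id) := L2 M hdisj
      _ ≤ rankD M M (A ∩ Q) + ∑ Q' ∈ Qs, rankD M M (A ∩ Q') := by
          exact Nat.add_le_add_left (ih hd') _

lemma submod_aux (hM : M.Loopless) (Qs : Finset (Finset (Fin n)))
    (hd : ∀ Q ∈ Qs, ∀ Q' ∈ Qs, Q ≠ Q' → Disjoint Q Q')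
    (hne : ∀ Q ∈ Qs, Q.Nonempty) :
    ∀ A, rankD M M (A ∪ Qs.sup id) + ∑ Q ∈ Qs, rankD M M (A ∩ Q) ≤
      rankD M M A + ∑ Q ∈ Qs, (M.rank Q + M.rank Q - 1) := by
  induction Qs using Finset.induction_on with
  | empty => simp
  | @insert Q Qs hQ ih =>
    intro A
    have hd' : ∀ B ∈ Qs, ∀ B' ∈ Qs, B ≠ B' → Disjoint B B' := fun B hB B' hB' =>
      hd B (Finset.mem_insert_of_mem hB) B' (Finset.mem_insert_of_mem hB')
    have hne' : ∀ B ∈ Qs, B.Nonempty := fun B hB => hne B (Finset.mem_insert_of_mem hB)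
    have hQd : ∀ Q' ∈ Qs, Disjoint Q Q' := fun Q' hQ' =>
      hd Q (Finset.mem_insert_self _ _) Q' (Finset.mem_insert_of_mem hQ')
        (fun h => hQ (h ▸ hQ'))
    have ihA := ih hd' hne' (A ∪ Q)
    have hrw : ∀ Q' ∈ Qs, rankD M M ((A ∪ Q) ∩ Q') = rankD M M (A ∩ Q') := by
      intro Q' hQ'
      congr 1
      rw [Finset.union_inter_distrib_right,
        Finset.disjoint_iff_inter_eq_empty.1 (hQd Q' hQ'), Finset.union_empty]
    rw [Finset.sum_congr rfl hrw] at ihA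
    have h3 := L3 M hM A Q (hne Q (Finset.mem_insert_self _ _))
    rw [Finset.sup_insert, Finset.sum_insert hQ, Finset.sum_insert hQ]
    have hun : A ∪ (id Q ⊔ Qs.sup id) = (A ∪ Q) ∪ Qs.sup id := by
      simp [Finset.union_assoc]
    rw [hun]
    omega

lemma submod (hM : M.Loopless) (A Y : Finset (Fin n)) :
    rankD M M (A ∪ Y) + rankD M M (A ∩ Y) ≤ rankD M M A + rankD M M Y := by
  obtain ⟨Qs, hv, hsup, hr⟩ := exists_covering M hM Y
  have haux := submod_aux M hM Qs hv.2 (fun Q hQ => (hv.1 Q hQ).2) A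
  have h2 := L2' M A Qs hv.2
  rw [hsup] at haux h2
  omega

end FinMatroid

open FinMatroid in
/-- If `M` is loopless and `D(M,M)` does not have expected rank
(`rank(D(M,M)) < 2·rank(M) − 1`), then `D(M,M)` is disconnected: it has a
proper nonempty separator. -/
theorem rankD_not_expected_disconnected (n : ℕ) (hn : 2 ≤ n)
    (M : FinMatroid n) (hM : M.Loopless)
    (hlt : rankD M M Finset.univ + 1 < 2 * M.rk) :
    ∃ T : Finset (Fin n), T.Nonempty ∧ T ≠ Finset.univ ∧
      ∀ A : Finset (Fin n),
        rankD M M A = rankD M M (A ∩ T) + rankD M M (A \ T) := by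
  classical
  obtain ⟨Ts, hv, hsup, hr⟩ := exists_covering M hM (Finset.univ : Finset (Fin n))
  -- Ts is nonempty
  have huniv_ne : (Finset.univ : Finset (Fin n)).Nonempty := by
    refine ⟨⟨0, by omega⟩, Finset.mem_univ _⟩
  have hTs_ne : Ts.Nonempty := by
    by_contra h
    rw [Finset.not_nonempty_iff_eq_empty] at h
    rw [h] at hsup
    simp at hsup
    exact absurd hsup.symm (Finset.nonempty_iff_ne_empty.1 huniv_ne)
  obtain ⟨T, hT⟩ := hTs_ne
  have hTne : T.Nonempty := (hv.1 T hT).2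
  -- T ≠ univ
  have hTneq : T ≠ Finset.univ := by
    intro h
    subst h
    have hTs : Ts = {Finset.univ} := by
      apply Finset.eq_singleton_iff_unique_mem.2
      refine ⟨hT, ?_⟩
      intro U hU
      by_contra hne
      have hd := hv.2 U hU Finset.univ hT hne
      obtain ⟨x, hx⟩ := (hv.1 U hU).2
      exact Finset.disjoint_left.1 hd hx (Finset.mem_univ x)
    rw [hTs, Finset.sum_singleton] at hr
    have : 1 ≤ M.rank Finset.univ := rank_pos M hM huniv_ne
    rw [rk] at hlt
    omega
  -- key equality
  have hkey : rankD M M T + rankD M M (Finset.univ \ T) = rankD M M Finset.univ := by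
    apply le_antisymm
    · -- upper bound via the family
      have h1 : rankD M M T ≤ M.rank T + M.rank T - 1 := by
        have hvT : ValidFamily T ({T} : Finset (Finset (Fin n))) := by
          constructor
          · intro U hU; rw [Finset.mem_singleton] at hU
            constructor
            · rw [hU]
            · rw [hU]; exact hTne
          · intro U hU U' hU' hne
            rw [Finset.mem_singleton] at hU hU'; subst hU; subst hU'
            exact absurd rfl hne
        have := rankD_le M hvT
        rw [famValue, Finset.sum_singleton, Finset.sup_singleton] at this
        simpa using this
      have h2 : rankD M M (Finset.univ \ T) ≤
          ∑ U ∈ Ts.erase T, (M.rank U + M.rank U - 1) := by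
        have hvE : ValidFamily (Finset.univ \ T) (Ts.erase T) := by
          constructor
          · intro U hU
            have hU' := Finset.mem_of_mem_erase hU
            have hne' := Finset.ne_of_mem_erase hU
            refine ⟨?_, (hv.1 U hU').2⟩
            intro x hx
            rw [Finset.mem_sdiff]
            refine ⟨Finset.mem_univ x, ?_⟩
            exact Finset.disjoint_left.1 (hv.2 U hU' T hT hne') hx
          · intro U hU U' hU' hne
            exact hv.2 U (Finset.mem_of_mem_erase hU) U' (Finset.mem_of_mem_erase hU') hne
        have hb := rankD_le M hvE
        have hcov : (Finset.univ \ T) \ (Ts.erase T).sup id = ∅ := by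
          rw [Finset.eq_empty_iff_forall_notMem]
          intro x hx
          rw [Finset.mem_sdiff, Finset.mem_sdiff] at hx
          obtain ⟨⟨_, hxT⟩, hxs⟩ := hx
          have : x ∈ Ts.sup id := hsup ▸ Finset.mem_univ x
          rw [Finset.mem_sup] at this
          obtain ⟨U, hU, hxU⟩ := this
          have hUne : U ≠ T := fun h => hxT (h ▸ hxU)
          exact hxs (Finset.mem_sup.2 ⟨U, Finset.mem_erase.2 ⟨hUne, hU⟩, hxU⟩)
        rw [famValue, hcov, Finset.card_empty] at hb
        omega
      have hsumsplit : (M.rank T + M.rank T - 1) +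
          ∑ U ∈ Ts.erase T, (M.rank U + M.rank U - 1) =
          ∑ U ∈ Ts, (M.rank U + M.rank U - 1) :=
        Finset.add_sum_erase Ts (fun U => M.rank U + M.rank U - 1) hT
      omega
    · have := L2 M (Finset.disjoint_sdiff (s := T) (t := Finset.univ))
      rw [Finset.union_sdiff_of_subset (Finset.subset_univ T)] at this
      exact this
  refine ⟨T, hTne, hTneq, ?_⟩
  intro A
  apply le_antisymm
  · have hdisj : Disjoint (A ∩ T) (A \ T) := by
      rw [Finset.disjoint_left]
      intro x hx hx'
      exact (Finset.mem_sdiff.1 hx').2 (Finset.mem_inter.1 hx).2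
    have hle := L2 M hdisj
    have hAeq : (A ∩ T) ∪ (A \ T) = A := by
      ext x
      simp only [Finset.mem_union, Finset.mem_inter, Finset.mem_sdiff]
      tauto
    rw [hAeq] at hle
    exact hle
  · have h1 := submod M hM A T
    have h2 := submod M hM (A ∪ T) (Finset.univ \ T)
    have e1 : (A ∪ T) ∪ (Finset.univ \ T) = Finset.univ := by
      apply Finset.eq_univ_of_forall
      intro x
      by_cases hx : x ∈ T
      · exact Finset.mem_union_left _ (Finset.mem_union_right _ hx)
      · exact Finset.mem_union_right _ (Finset.mem_sdiff.2 ⟨Finset.mem_univ x, hx⟩)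
    have e2 : (A ∪ T) ∩ (Finset.univ \ T) = A \ T := by
      ext x
      simp only [Finset.mem_inter, Finset.mem_union, Finset.mem_sdiff, Finset.mem_univ,
        true_and]
      tauto
    rw [e1, e2] at h2
    omega
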